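/- For the equally likely orthogonal basis {α|00⟩+β|11⟩, β|00⟩−α|11⟩, α|01⟩+β|10⟩, β|01⟩−α|10⟩} of ℂ²⊗ℂ² with α ≥ β > 0 real and α²+β² = 1, the separable fidelity equals α²; in particular the achievable fidelity of the computational basis measurement with decoding 00↦ψ₁, 11↦ψ₂, 01↦ψ₃, 10↦ψ₄ equals α². -/

import Mathlib

open Matrix
open scoped BigOperators ComplexOrder

noncomputable section

/-- Product vector `|a⟩⊗|b⟩`. -/
def prodv {d₁ d₂ : ℕ} (a : Fin d₁ → ℂ) (b : Fin d₂ → ℂ) : Fin d₁ × Fin d₂ → ℂ :=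
  fun y => a y.1 * b y.2

/-- Separable-fidelity set; its supremum is the separable fidelity `F_S`. -/
def sepFidSet {d₁ d₂ : ℕ} (N : ℕ) (p : Fin N → ℝ)
    (ψ : Fin N → (Fin d₁ × Fin d₂ → ℂ)) : Set ℝ :=
  {x : ℝ | ∃ (A : ℕ) (m : Fin A → ℝ) (χ₁ : Fin A → Fin d₁ → ℂ)
      (χ₂ : Fin A → Fin d₂ → ℂ) (φ : Fin A → (Fin d₁ × Fin d₂ → ℂ)),
    (∀ a, 0 < m a) ∧ (∀ a, star (φ a) ⬝ᵥ φ a = 1) ∧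
    (∑ a, (m a : ℂ) • Matrix.vecMulVec (prodv (χ₁ a) (χ₂ a))
        (star (prodv (χ₁ a) (χ₂ a))) = 1) ∧
    x = ∑ a, ∑ i, p i * m a *
          ‖star (ψ i) ⬝ᵥ prodv (χ₁ a) (χ₂ a)‖^2 *
          ‖star (ψ i) ⬝ᵥ φ a‖^2}

/-- The orthogonal basis `{α|00⟩+β|11⟩, β|00⟩−α|11⟩, α|01⟩+β|10⟩, β|01⟩−α|10⟩}`. -/
def ψαβ (α β : ℝ) : Fin 4 → (Fin 2 × Fin 2 → ℂ) :=
  ![fun y => if y = (0, 0) then (α : ℂ) else if y = (1, 1) then (β : ℂ) else 0,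
    fun y => if y = (0, 0) then (β : ℂ) else if y = (1, 1) then -(α : ℂ) else 0,
    fun y => if y = (0, 1) then (α : ℂ) else if y = (1, 0) then (β : ℂ) else 0,
    fun y => if y = (0, 1) then (β : ℂ) else if y = (1, 0) then -(α : ℂ) else 0]

/-- The decoding `00 ↦ ψ₁, 11 ↦ ψ₂, 01 ↦ ψ₃, 10 ↦ ψ₄` for the computational-basis
measurement. -/
def decode : Fin 2 × Fin 2 → Fin 4 :=
  fun a => if a = (0, 0) then 0 else if a = (1, 1) then 1
           else if a = (0, 1) then 2 else 3

lemma dot0 (α β : ℝ) (φ : Fin 2 × Fin 2 → ℂ) :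
    star (ψαβ α β 0) ⬝ᵥ φ = (α:ℂ) * φ (0,0) + (β:ℂ) * φ (1,1) := by
  simp [dotProduct, Fintype.sum_prod_type, Fin.sum_univ_two, ψαβ, Prod.ext_iff]

lemma dot1 (α β : ℝ) (φ : Fin 2 × Fin 2 → ℂ) :
    star (ψαβ α β 1) ⬝ᵥ φ = (β:ℂ) * φ (0,0) - (α:ℂ) * φ (1,1) := by
  simp [dotProduct, Fintype.sum_prod_type, Fin.sum_univ_two, ψαβ, Prod.ext_iff]; ring

lemma dot2 (α β : ℝ) (φ : Fin 2 × Fin 2 → ℂ) :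
    star (ψαβ α β 2) ⬝ᵥ φ = (α:ℂ) * φ (0,1) + (β:ℂ) * φ (1,0) := by
  simp [dotProduct, Fintype.sum_prod_type, Fin.sum_univ_two, ψαβ, Prod.ext_iff]

lemma dot3 (α β : ℝ) (φ : Fin 2 × Fin 2 → ℂ) :
    star (ψαβ α β 3) ⬝ᵥ φ = (β:ℂ) * φ (0,1) - (α:ℂ) * φ (1,0) := by
  simp [dotProduct, Fintype.sum_prod_type, Fin.sum_univ_two, ψαβ, Prod.ext_iff]; ring

lemma sumy (f : Fin 2 × Fin 2 → ℝ) :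
    ∑ y : Fin 2 × Fin 2, f y = f (0,0) + f (0,1) + f (1,0) + f (1,1) := by
  simp [Fintype.sum_prod_type, Fin.sum_univ_two]; ring

lemma parseval (α β : ℝ) (hnorm : α^2 + β^2 = 1) (φ : Fin 2 × Fin 2 → ℂ) :
    ∑ i : Fin 4, (‖star (ψαβ α β i) ⬝ᵥ φ‖)^2
      = ∑ y : Fin 2 × Fin 2, (‖φ y‖)^2 := by
  rw [Fin.sum_univ_four, dot0, dot1, dot2, dot3,
    sumy (fun y => (‖φ y‖)^2)]
  simp only [Complex.sq_norm, Complex.normSq_apply, Complex.add_re, Complex.add_im,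
    Complex.sub_re, Complex.sub_im, Complex.mul_re, Complex.mul_im,
    Complex.ofReal_re, Complex.ofReal_im]
  ring_nf
  nlinarith [hnorm, sq_nonneg ((φ (0,0)).re)]

lemma key (α γ δ : ℝ) (hα : 0 ≤ α) (hγ : |γ| ≤ α) (hδ : |δ| ≤ α) (x y : ℂ) :
    (‖(γ:ℂ)*x + (δ:ℂ)*y‖)^2 ≤ α^2 * (‖x‖ + ‖y‖)^2 := by
  have h1 : ‖(γ:ℂ)*x + (δ:ℂ)*y‖ ≤ α * (‖x‖ + ‖y‖) := by
    calc ‖(γ:ℂ)*x + (δ:ℂ)*y‖ ≤ ‖(γ:ℂ)*x‖ + ‖(δ:ℂ)*y‖ :=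
          norm_add_le _ _
      _ = |γ| * ‖x‖ + |δ| * ‖y‖ := by
          simp [norm_mul, Complex.norm_real]
      _ ≤ α * (‖x‖ + ‖y‖) := by
          nlinarith [norm_nonneg x, norm_nonneg y]
  have h0 : (0:ℝ) ≤ ‖(γ:ℂ)*x + (δ:ℂ)*y‖ := norm_nonneg _
  nlinarith [h1, h0]

lemma schmidt (α β : ℝ) (hβ : 0 < β) (hαβ : β ≤ α) (i : Fin 4) (χ₁ χ₂ : Fin 2 → ℂ) :
    (‖star (ψαβ α β i) ⬝ᵥ prodv χ₁ χ₂‖)^2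
      ≤ α^2 * ∑ y : Fin 2 × Fin 2, (‖prodv χ₁ χ₂ y‖)^2 := by
  have hα : (0:ℝ) ≤ α := le_trans hβ.le hαβ
  have hγ : |α| ≤ α := by rw [abs_of_nonneg hα]
  have hδ : |β| ≤ α := by rw [abs_of_nonneg hβ.le]; exact hαβ
  have hδ' : |(-α)| ≤ α := by rw [abs_neg, abs_of_nonneg hα]
  rw [sumy (fun y => (‖prodv χ₁ χ₂ y‖)^2)]
  set A0 := ‖χ₁ 0‖; set A1 := ‖χ₁ 1‖
  set B0 := ‖χ₂ 0‖; set B1 := ‖χ₂ 1‖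
  have hA0 : 0 ≤ A0 := norm_nonneg _
  have hA1 : 0 ≤ A1 := norm_nonneg _
  have hB0 : 0 ≤ B0 := norm_nonneg _
  have hB1 : 0 ≤ B1 := norm_nonneg _
  have cs1 : (A0*B0 + A1*B1)^2 ≤ (A0^2+A1^2)*(B0^2+B1^2) := by
    nlinarith [sq_nonneg (A0*B1 - A1*B0)]
  have cs2 : (A0*B1 + A1*B0)^2 ≤ (A0^2+A1^2)*(B0^2+B1^2) := by
    nlinarith [sq_nonneg (A0*B0 - A1*B1)]
  have hsq : (0:ℝ) ≤ α^2 := sq_nonneg α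
  fin_cases i
  · rw [show ((⟨0,by norm_num⟩ : Fin 4)) = 0 from rfl, dot0]
    refine le_trans (key α α β hα hγ hδ _ _) ?_
    simp only [prodv, norm_mul]
    nlinarith [cs1, hsq]
  · rw [show (⟨1,by norm_num⟩ : Fin 4) = 1 from rfl, dot1, sub_eq_add_neg, ← neg_mul,
      ← Complex.ofReal_neg]
    refine le_trans (key α β (-α) hα hδ hδ' _ _) ?_
    simp only [prodv, norm_mul]
    nlinarith [cs1, hsq]
  · rw [show (⟨2,by norm_num⟩ : Fin 4) = 2 from rfl, dot2]
    refine le_trans (key α α β hα hγ hδ _ _) ?_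
    simp only [prodv, norm_mul]
    nlinarith [cs2, hsq]
  · rw [show (⟨3,by norm_num⟩ : Fin 4) = 3 from rfl, dot3, sub_eq_add_neg, ← neg_mul,
      ← Complex.ofReal_neg]
    refine le_trans (key α β (-α) hα hδ hδ' _ _) ?_
    simp only [prodv, norm_mul]
    nlinarith [cs2, hsq]

lemma normsum {n : Type*} [Fintype n] (φ : n → ℂ) (h : star φ ⬝ᵥ φ = 1) :
    ∑ y, (‖φ y‖)^2 = 1 := by
  have h2 := congrArg Complex.re h
  rw [dotProduct] at h2
  simp only [Pi.star_apply, RCLike.star_def, Complex.re_sum, Complex.one_re] at h2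
  rw [← h2]
  refine Finset.sum_congr rfl fun y _ => ?_
  rw [Complex.sq_norm, mul_comm, Complex.mul_conj]
  simp

lemma trace4 {A : ℕ} (m : Fin A → ℝ) (v : Fin A → (Fin 2 × Fin 2 → ℂ))
    (h : ∑ a, (m a : ℂ) • Matrix.vecMulVec (v a) (star (v a)) = 1) :
    ∑ a, m a * ∑ y : Fin 2 × Fin 2, (‖v a y‖)^2 = 4 := by
  have hy : ∀ y : Fin 2 × Fin 2, ∑ a, m a * (‖v a y‖)^2 = 1 := by
    intro y
    have h2 := congrArg (fun M => (M y y).re) h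
    simp only [Matrix.sum_apply, Matrix.smul_apply, Matrix.vecMulVec_apply,
      Pi.star_apply, Matrix.one_apply_eq, Complex.one_re, smul_eq_mul,
      RCLike.star_def, Complex.mul_conj, Complex.re_sum] at h2
    rw [← h2]
    refine Finset.sum_congr rfl fun a _ => ?_
    rw [Complex.sq_norm]
    simp
  calc ∑ a, m a * ∑ y : Fin 2 × Fin 2, (‖v a y‖)^2
      = ∑ a, ∑ y : Fin 2 × Fin 2, m a * (‖v a y‖)^2 := by
        simp [Finset.mul_sum]
    _ = ∑ y : Fin 2 × Fin 2, ∑ a, m a * (‖v a y‖)^2 := Finset.sum_comm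
    _ = ∑ _y : Fin 2 × Fin 2, (1:ℝ) := by simp [hy]
    _ = 4 := by simp

lemma ortho (α β : ℝ) (hnorm : α^2 + β^2 = 1) (i j : Fin 4) :
    star (ψαβ α β i) ⬝ᵥ ψαβ α β j = if i = j then 1 else 0 := by
  have hC : (α:ℂ)^2 + (β:ℂ)^2 = 1 := by exact_mod_cast congrArg Complex.ofReal hnorm
  fin_cases i <;> fin_cases j <;>
    simp [dotProduct, Fintype.sum_prod_type, Fin.sum_univ_two, ψαβ, Prod.ext_iff] <;>
    first | linear_combination hC | ring

/-- upper bound -/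
lemma ub (α β : ℝ) (hαβ : α ≥ β) (hβ : 0 < β) (hnorm : α^2 + β^2 = 1) :
    ∀ x ∈ sepFidSet 4 (fun _ => (4 : ℝ)⁻¹) (ψαβ α β), x ≤ α^2 := by
  rintro x ⟨A, m, χ₁, χ₂, φ, hm, hφ, hPOVM, hx⟩
  set N : Fin A → ℝ := fun a => ∑ y : Fin 2 × Fin 2, (‖prodv (χ₁ a) (χ₂ a) y‖)^2
    with hN
  have hstep : ∀ a, ∑ i : Fin 4, (4:ℝ)⁻¹ * m a *
      (‖star (ψαβ α β i) ⬝ᵥ prodv (χ₁ a) (χ₂ a)‖)^2 *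
      (‖star (ψαβ α β i) ⬝ᵥ φ a‖)^2 ≤ (4:ℝ)⁻¹ * (m a * (α^2 * N a)) := by
    intro a
    have hT : ∑ i : Fin 4, (‖star (ψαβ α β i) ⬝ᵥ φ a‖)^2 = 1 := by
      rw [parseval α β hnorm]; exact normsum _ (hφ a)
    calc ∑ i : Fin 4, (4:ℝ)⁻¹ * m a *
          (‖star (ψαβ α β i) ⬝ᵥ prodv (χ₁ a) (χ₂ a)‖)^2 *
          (‖star (ψαβ α β i) ⬝ᵥ φ a‖)^2
        ≤ ∑ i : Fin 4, (4:ℝ)⁻¹ * m a * (α^2 * N a) *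
          (‖star (ψαβ α β i) ⬝ᵥ φ a‖)^2 := by
          refine Finset.sum_le_sum fun i _ => ?_
          have hS := schmidt α β hβ hαβ i (χ₁ a) (χ₂ a)
          have hma := (hm a).le
          have h1 : (0:ℝ) ≤ (4:ℝ)⁻¹ * m a := by positivity
          exact mul_le_mul_of_nonneg_right
            (mul_le_mul_of_nonneg_left hS h1) (sq_nonneg _)
      _ = (4:ℝ)⁻¹ * m a * (α^2 * N a) := by
          rw [← Finset.mul_sum, hT, mul_one]
      _ = (4:ℝ)⁻¹ * (m a * (α^2 * N a)) := by ring
  calc x ≤ ∑ a, (4:ℝ)⁻¹ * (m a * (α^2 * N a)) := by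
        rw [hx]; exact Finset.sum_le_sum fun a _ => hstep a
    _ = (4:ℝ)⁻¹ * α^2 * ∑ a, m a * N a := by
        rw [Finset.mul_sum]; exact Finset.sum_congr rfl fun a _ => by ring
    _ = α^2 := by rw [trace4 m _ hPOVM]; ring


def χ1c : Fin 4 → Fin 2 → ℂ := ![![1,0],![0,1],![1,0],![0,1]]
def χ2c : Fin 4 → Fin 2 → ℂ := ![![1,0],![0,1],![0,1],![1,0]]

lemma povmc : ∑ a : Fin 4, ((1:ℝ) : ℂ) • Matrix.vecMulVec (prodv (χ1c a) (χ2c a))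
    (star (prodv (χ1c a) (χ2c a))) = 1 := by
  ext ⟨y1,y2⟩ ⟨z1,z2⟩
  fin_cases y1 <;> fin_cases y2 <;> fin_cases z1 <;> fin_cases z2 <;>
    simp [Matrix.sum_apply, Fin.sum_univ_four, Matrix.vecMulVec_apply, prodv, χ1c, χ2c,
      Matrix.one_apply, Prod.ext_iff]

lemma valc (α β : ℝ) (hnorm : α^2 + β^2 = 1) :
    (α^2 : ℝ) = ∑ a : Fin 4, ∑ i : Fin 4, (4:ℝ)⁻¹ * 1 *
        (‖star (ψαβ α β i) ⬝ᵥ prodv (χ1c a) (χ2c a)‖)^2 *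
        (‖star (ψαβ α β i) ⬝ᵥ ψαβ α β a‖)^2 := by
  simp only [Fin.sum_univ_four, ortho α β hnorm, dot0, dot1, dot2, dot3]
  norm_num [prodv, χ1c, χ2c, Complex.norm_real, sq_abs, Matrix.vecHead, Matrix.vecTail,
    show ((3:Fin 4) ≠ 2) by decide, show ((2:Fin 4) ≠ 3) by decide,
    show ((3:Fin 4) ≠ 0) by decide, show ((3:Fin 4) ≠ 1) by decide,
    Matrix.cons_val_two, Matrix.cons_val_three,
      show ((0:Fin 4) ≠ 2) by decide, show ((1:Fin 4) ≠ 2) by decide,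
      show ((2:Fin 4) ≠ 0) by decide, show ((2:Fin 4) ≠ 1) by decide,
      show ((0:Fin 4) ≠ 3) by decide, show ((1:Fin 4) ≠ 3) by decide]
  linarith [hnorm]

lemma hmem (α β : ℝ) (hnorm : α^2 + β^2 = 1) :
    (α^2 : ℝ) ∈ sepFidSet 4 (fun _ => (4 : ℝ)⁻¹) (ψαβ α β) := by
  refine ⟨4, fun _ => 1, χ1c, χ2c, ψαβ α β, fun _ => one_pos,
    fun a => by rw [ortho α β hnorm]; simp, povmc, ?_⟩
  exact valc α β hnorm

/-- Example 3: for the equally likely basis `ψαβ` with `α ≥ β > 0`, `α² + β² = 1`,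
the separable fidelity equals `α²`, and the achievable fidelity of the
computational-basis measurement with the natural decoding equals `α²`. -/
theorem stmt14 (α β : ℝ) (hαβ : α ≥ β) (hβ : 0 < β) (hnorm : α^2 + β^2 = 1) :
    sSup (sepFidSet 4 (fun _ => (4 : ℝ)⁻¹) (ψαβ α β)) = α^2 ∧
    ∑ a : Fin 2 × Fin 2, ∑ i : Fin 4,
        (4 : ℝ)⁻¹ * ‖ψαβ α β i a‖^2 *
          ‖star (ψαβ α β i) ⬝ᵥ ψαβ α β (decode a)‖^2 = α^2 := by
  constructor
  · have hub := ub α β hαβ hβ hnorm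
    have hm := hmem α β hnorm
    exact le_antisymm (csSup_le ⟨α^2, hm⟩ hub) (le_csSup ⟨α^2, hub⟩ hm)
  · simp only [Fintype.sum_prod_type, Fin.sum_univ_two, Fin.sum_univ_four, ortho α β hnorm]
    norm_num [decode, ψαβ, Prod.ext_iff, Complex.norm_real, sq_abs, Matrix.vecHead,
      Matrix.vecTail,
      show ((3:Fin 4) ≠ 2) by decide, show ((2:Fin 4) ≠ 3) by decide,
      show ((3:Fin 4) ≠ 0) by decide, show ((3:Fin 4) ≠ 1) by decide,
      Matrix.cons_val_two, Matrix.cons_val_three,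
      show ((0:Fin 4) ≠ 2) by decide, show ((1:Fin 4) ≠ 2) by decide,
      show ((2:Fin 4) ≠ 0) by decide, show ((2:Fin 4) ≠ 1) by decide,
      show ((0:Fin 4) ≠ 3) by decide, show ((1:Fin 4) ≠ 3) by decide]
    linarith [hnorm]
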